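/- Up to multiplication by a positive scalar, a flux cone C ⊆ ℝ^R has only finitely many elementary flux modes; that is, the set of rays {λe : λ > 0} over all EFMs e of C is finite. -/
import Mathlib

def fluxCone {S R : Type*} [Fintype R] (N : Matrix S R ℝ) (Rirr : Set R) :
    Set (R → ℝ) :=
  {f | N.mulVec f = 0 ∧ ∀ r ∈ Rirr, 0 ≤ f r}

def IsEFM {S R : Type*} [Fintype R] (N : Matrix S R ℝ) (Rirr : Set R)
    (e : R → ℝ) : Prop :=
  e ∈ fluxCone N Rirr ∧ e ≠ 0 ∧
    ∀ g ∈ fluxCone N Rirr, g ≠ 0 →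
      Function.support g ⊆ Function.support e →
      Function.support g = Function.support e

lemma efm_sign_scalar {S R : Type*} [Fintype S] [Fintype R]
    (N : Matrix S R ℝ) (Rirr : Set R) (e1 e2 : R → ℝ)
    (h1 : IsEFM N Rirr e1) (h2 : IsEFM N Rirr e2)
    (hsgn : ∀ r, (0 < e1 r ↔ 0 < e2 r) ∧ (e1 r = 0 ↔ e2 r = 0)) :
    ∃ l : ℝ, 0 < l ∧ e1 = l • e2 := by
  obtain ⟨hc1, hne1, hmin1⟩ := h1
  obtain ⟨hc2, hne2, hmin2⟩ := h2
  set s : Finset R := Finset.univ.filter (fun r => e1 r ≠ 0) with hs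
  have hsne : s.Nonempty := by
    obtain ⟨r, hr⟩ := Function.ne_iff.mp hne1
    exact ⟨r, by simp [hs]; simpa using hr⟩
  have hmem : ∀ r, r ∈ s ↔ e1 r ≠ 0 := by intro r; simp [hs]
  have hratio : ∀ r ∈ s, 0 < e1 r / e2 r := by
    intro r hr
    have h1r : e1 r ≠ 0 := (hmem r).mp hr
    have h2r : e2 r ≠ 0 := fun h => h1r ((hsgn r).2.mpr h)
    rcases lt_trichotomy (e1 r) 0 with hlt | heq | hgt
    · have : e2 r < 0 := by
        rcases lt_trichotomy (e2 r) 0 with h | h | h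
        · exact h
        · exact absurd h h2r
        · exact absurd ((hsgn r).1.mpr h) (not_lt.mpr hlt.le)
      exact div_pos_of_neg_of_neg hlt this
    · exact absurd heq h1r
    · exact div_pos hgt ((hsgn r).1.mp hgt)
  set l : ℝ := s.inf' hsne (fun r => e1 r / e2 r) with hl
  have hlpos : 0 < l := by
    rw [hl, Finset.lt_inf'_iff]
    exact hratio
  obtain ⟨r0, hr0s, hr0⟩ := Finset.exists_mem_eq_inf' hsne (fun r => e1 r / e2 r)
  -- g := e1 - l • e2
  set g : R → ℝ := e1 - l • e2 with hg
  have hgr : ∀ r, e1 r ≠ 0 → (0 ≤ e2 r → 0 ≤ g r) := by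
    intro r h1r h2r
    have hrs : r ∈ s := (hmem r).mpr h1r
    have h2r' : e2 r ≠ 0 := fun h => h1r ((hsgn r).2.mpr h)
    have h2pos : 0 < e2 r := lt_of_le_of_ne h2r (Ne.symm h2r')
    have hle : l ≤ e1 r / e2 r := Finset.inf'_le _ hrs
    have : l * e2 r ≤ e1 r := by
      rw [← le_div_iff₀ h2pos] at *
      exact hle
    simpa [hg, sub_nonneg] using this
  have hgzero : ∀ r, e1 r = 0 → g r = 0 := by
    intro r h1r
    have h2r : e2 r = 0 := (hsgn r).2.mp h1r
    simp [hg, h1r, h2r]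
  have hgcone : g ∈ fluxCone N Rirr := by
    constructor
    · have : N.mulVec g = N.mulVec e1 - l • N.mulVec e2 := by
        rw [hg, Matrix.mulVec_sub, Matrix.mulVec_smul]
      rw [this, hc1.1, hc2.1]; simp
    · intro r hr
      by_cases h1r : e1 r = 0
      · exact (hgzero r h1r).ge
      · exact hgr r h1r (hc2.2 r hr)
  have hgr0 : g r0 = 0 := by
    have h1r0 : e1 r0 ≠ 0 := (hmem r0).mp hr0s
    have h2r0 : e2 r0 ≠ 0 := fun h => h1r0 ((hsgn r0).2.mpr h)
    have : l = e1 r0 / e2 r0 := hr0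
    simp [hg, this, div_mul_cancel₀ _ h2r0]
  have hgeq : g = 0 := by
    by_contra hgne
    have hsub : Function.support g ⊆ Function.support e1 := by
      intro r hr
      simp only [Function.mem_support] at *
      exact fun h => hr (hgzero r h)
    have := hmin1 g hgcone hgne hsub
    have hr0supp : r0 ∈ Function.support e1 := (hmem r0).mp hr0s
    rw [← this] at hr0supp
    exact hr0supp hgr0
  refine ⟨l, hlpos, ?_⟩
  have := sub_eq_zero.mp (hg ▸ hgeq : e1 - l • e2 = 0)
  exact this

lemma efm_ray_subset {S R : Type*} [Fintype S] [Fintype R]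
    (N : Matrix S R ℝ) (Rirr : Set R) (e1 e2 : R → ℝ)
    (h1 : IsEFM N Rirr e1) (h2 : IsEFM N Rirr e2)
    (hsgn : ∀ r, (0 < e1 r ↔ 0 < e2 r) ∧ (e1 r = 0 ↔ e2 r = 0)) :
    {x : R → ℝ | ∃ l : ℝ, 0 < l ∧ x = l • e1} ⊆ {x | ∃ l : ℝ, 0 < l ∧ x = l • e2} := by
  obtain ⟨c, hc, hce⟩ := efm_sign_scalar N Rirr e1 e2 h1 h2 hsgn
  rintro x ⟨l, hl, rfl⟩
  exact ⟨l * c, mul_pos hl hc, by rw [hce, smul_smul]⟩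

/-- the set of rays `{λ • e : λ > 0}` over all EFMs `e` is finite. -/
theorem efm_rays_finite {S R : Type*} [Fintype S] [Fintype R]
    (N : Matrix S R ℝ) (Rirr : Set R) :
    {s : Set (R → ℝ) | ∃ e : R → ℝ, IsEFM N Rirr e ∧
      s = {x | ∃ l : ℝ, 0 < l ∧ x = l • e}}.Finite := by
  rw [← Set.finite_coe_iff]
  classical
  have : ∀ t : {s : Set (R → ℝ) | ∃ e : R → ℝ, IsEFM N Rirr e ∧
      s = {x | ∃ l : ℝ, 0 < l ∧ x = l • e}}, ∃ e : R → ℝ, IsEFM N Rirr e ∧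
      (t : Set (R → ℝ)) = {x | ∃ l : ℝ, 0 < l ∧ x = l • e} := fun t => t.2
  choose φ hφ hφ2 using this
  have : Function.Injective (fun t => (fun r => (decide (0 < φ t r), decide (φ t r = 0)) : R → Bool × Bool)) := by
    intro t1 t2 heq
    have hsgn : ∀ r, (0 < φ t1 r ↔ 0 < φ t2 r) ∧ (φ t1 r = 0 ↔ φ t2 r = 0) := by
      intro r
      have h := congrFun heq r
      simp only [Prod.mk.injEq, decide_eq_decide] at h
      exact h
    have hsgn' : ∀ r, (0 < φ t2 r ↔ 0 < φ t1 r) ∧ (φ t2 r = 0 ↔ φ t1 r = 0) :=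
      fun r => ⟨(hsgn r).1.symm, (hsgn r).2.symm⟩
    have hsub1 := efm_ray_subset N Rirr _ _ (hφ t1) (hφ t2) hsgn
    have hsub2 := efm_ray_subset N Rirr _ _ (hφ t2) (hφ t1) hsgn'
    have : (t1 : Set (R → ℝ)) = (t2 : Set (R → ℝ)) := by
      rw [hφ2 t1, hφ2 t2]
      exact le_antisymm hsub1 hsub2
    exact Subtype.ext this
  exact Finite.of_injective _ this
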